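/- Let C be a finitely complete pointed category with coequalizers in which regular epimorphisms are stable under binary products. If C is a majority category, then C satisfies property (P). -/

import Mathlib

open CategoryTheory Limits

/-- `q` is a coequalizer of the parallel pair `(u, v)`. -/
def IsCoeq {C : Type*} [Category C] {T X Q : C} (u v : T ⟶ X) (q : X ⟶ Q) : Prop :=
  ∃ h : u ≫ q = v ≫ q, Nonempty (IsColimit (Cofork.ofπ q h))

/-- Property (P): the product of two coequalizer diagrams is a coequalizer diagram. -/
def PropertyP (C : Type*) [Category C] [HasBinaryProducts C] : Prop :=
  ∀ {T₁ T₂ X X' Y Y' : C} (u v : T₁ ⟶ X) (u' v' : T₂ ⟶ Y) (q₁ : X ⟶ X') (q₂ : Y ⟶ Y'),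
    IsCoeq u v q₁ → IsCoeq u' v' q₂ →
      IsCoeq (prod.map u u') (prod.map v v') (prod.map q₁ q₂)

/-- A regular epimorphism: a coequalizer of some parallel pair. -/
def IsRegEpi {C : Type*} [Category C] {X Q : C} (q : X ⟶ Q) : Prop :=
  ∃ (T : C) (a b : T ⟶ X), IsCoeq a b q

/-- A generalized element `m : S ⟶ X` belongs to the (sub)object `r : R ⟶ X` if it
factors through `r`. -/
def Factors {C : Type*} [Category C] {R X S : C} (r : R ⟶ X) (m : S ⟶ X) : Prop :=
  ∃ h : S ⟶ R, h ≫ r = m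

/-- A finitely complete category is a majority category if for every ternary relation
`r : R ↪ X ⨯ Y ⨯ Z` and generalized elements, `(x,y,z') ∈ R`, `(x,y',z) ∈ R` and
`(x',y,z) ∈ R` imply `(x,y,z) ∈ R`. -/
def Majority (C : Type*) [Category C] [HasBinaryProducts C] : Prop :=
  ∀ {R X Y Z : C} (r : R ⟶ X ⨯ Y ⨯ Z), Mono r →
    ∀ {S : C} (x x' : S ⟶ X) (y y' : S ⟶ Y) (z z' : S ⟶ Z),
      Factors r (prod.lift x (prod.lift y z')) →
      Factors r (prod.lift x (prod.lift y' z)) →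
      Factors r (prod.lift x' (prod.lift y z)) →
      Factors r (prod.lift x (prod.lift y z))

section Aux

variable {C : Type*} [Category C] [HasFiniteLimits C] [HasZeroMorphisms C]

/-- Key lemma: if `t` coequalizes `u ⨯ u'` and `v ⨯ v'`, then `t` identifies
`⟨a₁, ψ⟩` and `⟨b₁, ψ⟩` whenever `a₁ ≫ q₁ = b₁ ≫ q₁`. -/
theorem dagger (hM : Majority C) {T₁ T₂ X Y X' W : C}
    (u v : T₁ ⟶ X) (u' v' : T₂ ⟶ Y) (q₁ : X ⟶ X') (hq : IsCoeq u v q₁)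
    (t : X ⨯ Y ⟶ W) (ht : prod.map u u' ≫ t = prod.map v v' ≫ t)
    {S : C} (a₁ b₁ : S ⟶ X) (hab : a₁ ≫ q₁ = b₁ ≫ q₁) (ψ : S ⟶ Y) :
    prod.lift a₁ ψ ≫ t = prod.lift b₁ ψ ≫ t := by
  -- the relation R ⊆ X ⨯ (X ⨯ (Y ⨯ Y)) given by t(x₁, y₁) = t(x₂, y₂)
  set f : X ⨯ X ⨯ Y ⨯ Y ⟶ W :=
    prod.lift prod.fst (prod.snd ≫ prod.snd ≫ prod.fst) ≫ t with hf
  set g : X ⨯ X ⨯ Y ⨯ Y ⟶ W :=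
    prod.lift (prod.snd ≫ prod.fst) (prod.snd ≫ prod.snd ≫ prod.snd) ≫ t with hg
  have key : ∀ (x₁ x₂ : S ⟶ X) (y₁ y₂ : S ⟶ Y),
      prod.lift x₁ (prod.lift x₂ (prod.lift y₁ y₂)) ≫ f = prod.lift x₁ y₁ ≫ t ∧
      prod.lift x₁ (prod.lift x₂ (prod.lift y₁ y₂)) ≫ g = prod.lift x₂ y₂ ≫ t := by
    intro x₁ x₂ y₁ y₂
    constructor
    · rw [hf, ← Category.assoc, prod.comp_lift]
      simp [prod.lift_fst, prod.lift_snd, prod.lift_fst_assoc, prod.lift_snd_assoc]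
    · rw [hg, ← Category.assoc, prod.comp_lift]
      simp [prod.lift_fst, prod.lift_snd, prod.lift_fst_assoc, prod.lift_snd_assoc]
  have mem : ∀ (x₁ x₂ : S ⟶ X) (y₁ y₂ : S ⟶ Y),
      Factors (equalizer.ι f g) (prod.lift x₁ (prod.lift x₂ (prod.lift y₁ y₂))) ↔
        prod.lift x₁ y₁ ≫ t = prod.lift x₂ y₂ ≫ t := by
    intro x₁ x₂ y₁ y₂
    constructor
    · rintro ⟨h, hh⟩
      have := equalizer.condition f g
      rw [← (key x₁ x₂ y₁ y₂).1, ← (key x₁ x₂ y₁ y₂).2, ← hh,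
        Category.assoc, Category.assoc, this]
    · intro h
      refine ⟨equalizer.lift _ ?_, equalizer.lift_ι _ _⟩
      rw [(key x₁ x₂ y₁ y₂).1, (key x₁ x₂ y₁ y₂).2, h]
  -- premise 1 : t(a₁, 0) = t(b₁, 0)
  have prem1 : prod.lift a₁ (0 : S ⟶ Y) ≫ t = prod.lift b₁ (0 : S ⟶ Y) ≫ t := by
    obtain ⟨hc, ⟨hcol⟩⟩ := hq
    set j : X ⟶ X ⨯ Y := prod.lift (𝟙 X) 0 with hj
    have huj : u ≫ (j ≫ t) = v ≫ (j ≫ t) := by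
      have h1 : u ≫ j = prod.lift (𝟙 T₁) (0 : T₁ ⟶ T₂) ≫ prod.map u u' := by
        simp [hj]
      have h2 : v ≫ j = prod.lift (𝟙 T₁) (0 : T₁ ⟶ T₂) ≫ prod.map v v' := by
        simp [hj]
      rw [← Category.assoc, ← Category.assoc, h1, h2, Category.assoc, Category.assoc, ht]
    -- j ≫ t factors through q₁
    have : q₁ ≫ hcol.desc (Cofork.ofπ (j ≫ t) huj) = j ≫ t :=
      Cofork.IsColimit.π_desc hcol
    have hres : a₁ ≫ (j ≫ t) = b₁ ≫ (j ≫ t) := by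
      rw [← this, ← Category.assoc, ← Category.assoc, hab]
    have ha : prod.lift a₁ (0 : S ⟶ Y) = a₁ ≫ j := by simp [hj]
    have hb : prod.lift b₁ (0 : S ⟶ Y) = b₁ ≫ j := by simp [hj]
    rw [ha, hb, Category.assoc, Category.assoc, hres]
  -- apply majority
  have maj := hM (equalizer.ι f g) inferInstance a₁ b₁ b₁ a₁
      (prod.lift ψ ψ) (prod.lift (0 : S ⟶ Y) (0 : S ⟶ Y))
      ((mem a₁ b₁ 0 0).2 prem1)
      ((mem a₁ a₁ ψ ψ).2 rfl)
      ((mem b₁ b₁ ψ ψ).2 rfl)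
  exact (mem a₁ b₁ ψ ψ).1 maj

/-- The symmetric version of `dagger`. -/
theorem dagger' (hM : Majority C) {T₁ T₂ X Y Y' W : C}
    (u v : T₁ ⟶ X) (u' v' : T₂ ⟶ Y) (q₂ : Y ⟶ Y') (hq : IsCoeq u' v' q₂)
    (t : X ⨯ Y ⟶ W) (ht : prod.map u u' ≫ t = prod.map v v' ≫ t)
    {S : C} (a₂ b₂ : S ⟶ Y) (hab : a₂ ≫ q₂ = b₂ ≫ q₂) (ψ : S ⟶ X) :
    prod.lift ψ a₂ ≫ t = prod.lift ψ b₂ ≫ t := by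
  set σ : Y ⨯ X ⟶ X ⨯ Y := prod.lift prod.snd prod.fst with hσ
  have ht' : prod.map u' u ≫ (σ ≫ t) = prod.map v' v ≫ (σ ≫ t) := by
    have h1 : prod.map u' u ≫ σ = (prod.lift prod.snd prod.fst : T₂ ⨯ T₁ ⟶ T₁ ⨯ T₂) ≫
        prod.map u u' := by simp [hσ]
    have h2 : prod.map v' v ≫ σ = (prod.lift prod.snd prod.fst : T₂ ⨯ T₁ ⟶ T₁ ⨯ T₂) ≫
        prod.map v v' := by simp [hσ]
    rw [← Category.assoc, ← Category.assoc, h1, h2, Category.assoc, Category.assoc, ht]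
  have := dagger hM u' v' u v q₂ hq (σ ≫ t) ht' a₂ b₂ hab ψ
  have ea : prod.lift a₂ ψ ≫ σ = prod.lift ψ a₂ := by simp [hσ, prod.lift_fst, prod.lift_snd, prod.lift_fst_assoc, prod.lift_snd_assoc]
  have eb : prod.lift b₂ ψ ≫ σ = prod.lift ψ b₂ := by simp [hσ, prod.lift_fst, prod.lift_snd, prod.lift_fst_assoc, prod.lift_snd_assoc]
  rw [← Category.assoc, ← Category.assoc, ea, eb] at this
  exact this

end Aux

theorem stmt6 {C : Type*} [Category C] [HasFiniteLimits C] [HasCoequalizers C]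
    [HasZeroObject C] [HasZeroMorphisms C]
    (hstab : ∀ {X X' Y Y' : C} (f : X ⟶ X') (g : Y ⟶ Y'),
      IsRegEpi f → IsRegEpi g → IsRegEpi (prod.map f g))
    (hM : Majority C) : PropertyP C := by
  intro T₁ T₂ X X' Y Y' u v u' v' q₁ q₂ hq₁ hq₂
  have hcomm : prod.map u u' ≫ prod.map q₁ q₂ = prod.map v v' ≫ prod.map q₁ q₂ := by
    rw [prod.map_map, prod.map_map, hq₁.choose, hq₂.choose]
  refine ⟨hcomm, ?_⟩
  obtain ⟨T, a, b, hab, ⟨hcol⟩⟩ := hstab q₁ q₂ ⟨T₁, u, v, hq₁⟩ ⟨T₂, u', v', hq₂⟩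
  constructor
  apply Cofork.IsColimit.mk'
  intro s
  have hts : prod.map u u' ≫ s.π = prod.map v v' ≫ s.π := s.condition
  -- a ≫ s.π = b ≫ s.π
  have h1 : (a ≫ prod.fst) ≫ q₁ = (b ≫ prod.fst) ≫ q₁ := by
    have := hab =≫ prod.fst
    simpa using this
  have h2 : (a ≫ prod.snd) ≫ q₂ = (b ≫ prod.snd) ≫ q₂ := by
    have := hab =≫ prod.snd
    simpa using this
  have habs : a ≫ s.π = b ≫ s.π := by
    have e1 : prod.lift (a ≫ prod.fst) (a ≫ prod.snd) ≫ s.π =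
        prod.lift (b ≫ prod.fst) (a ≫ prod.snd) ≫ s.π :=
      dagger hM u v u' v' q₁ hq₁ s.π hts _ _ h1 _
    have e2 : prod.lift (b ≫ prod.fst) (a ≫ prod.snd) ≫ s.π =
        prod.lift (b ≫ prod.fst) (b ≫ prod.snd) ≫ s.π :=
      dagger' hM u v u' v' q₂ hq₂ s.π hts _ _ h2 _
    have ha : prod.lift (a ≫ prod.fst) (a ≫ prod.snd) = a := by
      apply Limits.prod.hom_ext <;> simp [prod.lift_fst, prod.lift_snd, prod.lift_fst_assoc, prod.lift_snd_assoc]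
    have hb : prod.lift (b ≫ prod.fst) (b ≫ prod.snd) = b := by
      apply Limits.prod.hom_ext <;> simp [prod.lift_fst, prod.lift_snd, prod.lift_fst_assoc, prod.lift_snd_assoc]
    rw [← ha, ← hb, e1, e2]
  refine ⟨hcol.desc (Cofork.ofπ s.π habs), ?_, ?_⟩
  · exact Cofork.IsColimit.π_desc hcol
  · intro m hm
    apply Cofork.IsColimit.hom_ext hcol
    have h3 : (Cofork.ofπ (prod.map q₁ q₂) hab).π ≫ hcol.desc (Cofork.ofπ s.π habs) = s.π :=
      Cofork.IsColimit.π_desc hcol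
    have hm' : (Cofork.ofπ (prod.map q₁ q₂) hab).π ≫ m = s.π := hm
    rw [h3, hm']
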